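/- Let A ∈ ℝ^{n×n} be stable, B ∈ ℝ^{n×m}, C ∈ ℝ^{p×n}, and let S ⊆ ℝ^{r×r} be a nonempty compact set every element of which is stable. Then there exist constants c₁ > 0 and c₂ > 0 with the following property: for all A₁, A₂ ∈ S, all B_r ∈ ℝ^{r×m}, and all C_r ∈ ℝ^{p×r}, if for i = 1, 2 the matrices X_i, Y_i ∈ ℝ^{n×r} and P_i, Q_i ∈ ℝ^{r×r} satisfy A X_i + X_i A_iᵀ + B B_rᵀ = 0, Aᵀ Y_i + Y_i A_i − Cᵀ C_r = 0, A_i P_i + P_i A_iᵀ + B_r B_rᵀ = 0, and A_iᵀ Q_i + Q_i A_i + C_rᵀ C_r = 0, then ‖(Q₁ P₁ + Y₁ᵀ X₁) − (Q₂ P₂ + Y₂ᵀ X₂)‖_F ≤ (c₁ + c₂ ‖B_r‖_F ‖C_r‖_F) ‖B_r‖_F ‖C_r‖_F ‖A₁ − A₂‖_F. -/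

import Mathlib

open Matrix

/-- A square real matrix is stable if every eigenvalue (as a complex matrix)
has negative real part. -/
def IsStable {r : ℕ} (A : Matrix (Fin r) (Fin r) ℝ) : Prop :=
  ∀ μ ∈ spectrum ℂ (A.map Complex.ofReal), μ.re < 0

/-- The Frobenius norm of a real matrix. -/
noncomputable def frobNorm {m n : ℕ} (M : Matrix (Fin m) (Fin n) ℝ) : ℝ :=
  Real.sqrt (Matrix.trace (Mᵀ * M))

open Polynomial

attribute [local instance] Matrix.frobeniusSeminormedAddCommGroup
  Matrix.frobeniusNormedAddCommGroup Matrix.frobeniusNormedSpace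
  Matrix.frobeniusIsBoundedSMul

lemma frobNorm_eq_norm {m n : ℕ} (M : Matrix (Fin m) (Fin n) ℝ) : frobNorm M = ‖M‖ := by
  rw [frobNorm, Matrix.frobenius_norm_def]
  have h : Matrix.trace (Mᵀ * M) = ∑ i, ∑ j, ‖M i j‖ ^ (2:ℝ) := by
    rw [Matrix.trace]
    simp only [Matrix.diag, Matrix.mul_apply, Matrix.transpose_apply]
    rw [Finset.sum_comm]
    congr 1; ext i; congr 1; ext j
    rw [Real.rpow_two, Real.norm_eq_abs, sq_abs]; ring
  rw [h]
  rw [Real.sqrt_eq_rpow]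

example : True := trivial

section spectral

variable {K : Type*} [Field K] {k : ℕ}

lemma eval_charpoly_det (M : Matrix (Fin k) (Fin k) K) (μ : K) :
    M.charpoly.eval μ = (Matrix.scalar (Fin k) μ - M).det := by
  rw [Matrix.charpoly, _root_.eval_det, Matrix.matPolyEquiv_charmatrix]
  congr 1
  rw [Polynomial.eval_sub, Polynomial.eval_X, Polynomial.eval_C]

lemma mem_spectrum_iff_eval (M : Matrix (Fin k) (Fin k) K) (μ : K) :
    μ ∈ spectrum K M ↔ M.charpoly.eval μ = 0 := by
  rw [spectrum.mem_iff, eval_charpoly_det]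
  have h : (algebraMap K (Matrix (Fin k) (Fin k) K)) μ = Matrix.scalar (Fin k) μ := rfl
  rw [h, Matrix.isUnit_iff_isUnit_det, isUnit_iff_ne_zero, not_not]

end spectral

section spectral2

variable {K : Type*} [Field K] {k : ℕ}

lemma spectrum_transpose (M : Matrix (Fin k) (Fin k) K) :
    spectrum K Mᵀ = spectrum K M := by
  ext μ
  rw [mem_spectrum_iff_eval, mem_spectrum_iff_eval, eval_charpoly_det, eval_charpoly_det]
  have h : Matrix.scalar (Fin k) μ - Mᵀ = (Matrix.scalar (Fin k) μ - M)ᵀ := by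
    rw [Matrix.transpose_sub]
    congr 1
    simp [Matrix.scalar, Matrix.diagonal_transpose]
  rw [h, Matrix.det_transpose]

lemma mem_spectrum_neg (M : Matrix (Fin k) (Fin k) K) (μ : K) :
    μ ∈ spectrum K (-M) ↔ -μ ∈ spectrum K M := by
  rw [spectrum.mem_iff, spectrum.mem_iff]
  have h : algebraMap K (Matrix (Fin k) (Fin k) K) μ - (-M)
      = -((algebraMap K (Matrix (Fin k) (Fin k) K)) (-μ) - M) := by
    rw [map_neg]; abel
  rw [h, IsUnit.neg_iff]

lemma IsStable.transpose {A : Matrix (Fin k) (Fin k) ℝ} (hA : IsStable A) : IsStable Aᵀ := by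
  intro μ hμ
  apply hA
  have h : (Aᵀ).map Complex.ofReal = ((A.map Complex.ofReal))ᵀ := rfl
  rw [h, spectrum_transpose] at hμ
  exact hμ

end spectral2

section sylvester

variable {a b : ℕ}

lemma map_ofReal_eq (M : Matrix (Fin a) (Fin b) ℝ) :
    M.map Complex.ofReal = M.map (algebraMap ℝ ℂ) := rfl

lemma sylvester_unique (G : Matrix (Fin a) (Fin a) ℝ) (F : Matrix (Fin b) (Fin b) ℝ)
    (hG : IsStable G) (hF : IsStable F) (X : Matrix (Fin a) (Fin b) ℝ)
    (h : G * X + X * F = 0) : X = 0 := by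
  rcases Nat.eq_zero_or_pos a with ha | ha
  · subst ha; ext i j; exact i.elim0
  -- pass to ℂ
  set f := (algebraMap ℝ ℂ)
  set G' := G.map f with hG'
  set N := -(F.map f) with hN
  set X' := X.map f with hX'
  have hcomm : G' * X' = X' * N := by
    have h0 : (G * X + X * F).map f = (0 : Matrix (Fin a) (Fin b) ℝ).map f := by rw [h]
    have hadd : ∀ x y : ℝ, f (x + y) = f x + f y := fun x y => map_add f x y
    rw [Matrix.map_add _ hadd, Matrix.map_mul, Matrix.map_mul, Matrix.map_zero _ (map_zero f)] at h0
    rw [hN, Matrix.mul_neg, eq_neg_iff_add_eq_zero]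
    exact h0
  have hpow : ∀ q : ℕ, G' ^ q * X' = X' * N ^ q := by
    intro q
    induction q with
    | zero => simp
    | succ q ih =>
      calc G' ^ (q+1) * X' = (G' * G' ^ q) * X' := by rw [pow_succ']
        _ = G' * (G' ^ q * X') := Matrix.mul_assoc _ _ _
        _ = G' * (X' * N ^ q) := by rw [ih]
        _ = (G' * X') * N ^ q := (Matrix.mul_assoc _ _ _).symm
        _ = (X' * N) * N ^ q := by rw [hcomm]
        _ = X' * (N * N ^ q) := Matrix.mul_assoc _ _ _
        _ = X' * N ^ (q+1) := by rw [← pow_succ']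
  have haevc : ∀ q : ℂ[X], (aeval G') q * X' = X' * (aeval N) q := by
    intro q
    rw [Polynomial.aeval_eq_sum_range, Polynomial.aeval_eq_sum_range, Matrix.sum_mul,
      Matrix.mul_sum]
    refine Finset.sum_congr rfl fun i _ => ?_
    rw [Matrix.smul_mul, Matrix.mul_smul, hpow]
  have hkill : X' * (aeval N) G'.charpoly = 0 := by
    rw [← haevc, Matrix.aeval_self_charpoly, Matrix.zero_mul]
  have hunit : IsUnit ((aeval N) G'.charpoly) := by
    by_contra hnu
    have h0 : (0 : ℂ) ∈ spectrum ℂ ((aeval N) G'.charpoly) := by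
      rw [spectrum.zero_mem_iff]; exact hnu
    have hdeg : 0 < G'.charpoly.degree := by
      rw [Matrix.charpoly_degree_eq_dim]
      have : 0 < Fintype.card (Fin a) := by simpa using ha
      exact_mod_cast this
    rw [spectrum.map_polynomial_aeval_of_degree_pos N G'.charpoly hdeg] at h0
    obtain ⟨μ, hμN, hμ0⟩ := h0
    -- μ ∈ spectrum N means -μ ∈ spectrum (F.map f), so (-μ).re < 0, i.e. μ.re > 0
    have hμre : 0 < μ.re := by
      rw [hN, mem_spectrum_neg] at hμN
      have := hF (-μ) (by rwa [map_ofReal_eq])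
      simpa using this
    -- eval μ charpoly = 0 means μ ∈ spectrum G', so μ.re < 0
    have hμmem : μ ∈ spectrum ℂ G' := (mem_spectrum_iff_eval G' μ).mpr hμ0
    have := hG μ (by rwa [map_ofReal_eq])
    linarith
  have hX0 : X' = 0 := by
    obtain ⟨u, hu⟩ := hunit
    have h2 := congr_arg (fun M => M * (↑u⁻¹ : Matrix (Fin b) (Fin b) ℂ)) hkill
    simp only [← hu, Matrix.zero_mul] at h2
    rwa [Matrix.mul_assoc, Units.mul_inv, Matrix.mul_one] at h2
  ext i j
  have := congr_fun (congr_fun hX0 i) j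
  simpa [hX', f] using this

end sylvester

section opbound

variable {a b r : ℕ}

/-- The Sylvester operator `X ↦ G * X + X * F` as a linear map. -/
def sylvLin (G : Matrix (Fin a) (Fin a) ℝ) (F : Matrix (Fin b) (Fin b) ℝ) :
    Matrix (Fin a) (Fin b) ℝ →ₗ[ℝ] Matrix (Fin a) (Fin b) ℝ where
  toFun X := G * X + X * F
  map_add' X Y := by
    simp only [Matrix.mul_add, Matrix.add_mul]
    abel
  map_smul' c X := by
    simp only [Matrix.mul_smul, Matrix.smul_mul, RingHom.id_apply, smul_add]

/-- The Sylvester operator as a continuous linear map. -/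
noncomputable def sylvCLM (G : Matrix (Fin a) (Fin a) ℝ) (F : Matrix (Fin b) (Fin b) ℝ) :
    Matrix (Fin a) (Fin b) ℝ →L[ℝ] Matrix (Fin a) (Fin b) ℝ :=
  LinearMap.toContinuousLinearMap (sylvLin G F)

lemma continuous_sylvCLM :
    Continuous (fun GF : Matrix (Fin a) (Fin a) ℝ × Matrix (Fin b) (Fin b) ℝ =>
      sylvCLM GF.1 GF.2) := by
  have h : IsLinearMap ℝ (fun GF : Matrix (Fin a) (Fin a) ℝ × Matrix (Fin b) (Fin b) ℝ =>
      sylvCLM GF.1 GF.2) := by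
    constructor
    · rintro ⟨G₁, F₁⟩ ⟨G₂, F₂⟩
      ext X i j
      simp [sylvCLM, sylvLin, Matrix.add_mul, Matrix.mul_add, LinearMap.toContinuousLinearMap]
      ring
    · rintro c ⟨G, F⟩
      ext X i j
      simp [sylvCLM, sylvLin, Matrix.smul_mul, Matrix.mul_smul, LinearMap.toContinuousLinearMap]
      ring
  exact (h.mk' _).continuous_of_finiteDimensional

lemma sylvCLM_isUnit {G : Matrix (Fin a) (Fin a) ℝ} {F : Matrix (Fin b) (Fin b) ℝ}
    (hG : IsStable G) (hF : IsStable F) : IsUnit (sylvCLM G F) := by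
  have hinj : Function.Injective (sylvLin G F) := by
    rw [← LinearMap.ker_eq_bot, LinearMap.ker_eq_bot']
    intro X hX
    exact sylvester_unique G F hG hF X hX
  have hbij : Function.Bijective (sylvLin G F) :=
    ⟨hinj, (LinearMap.injective_iff_surjective).mp hinj⟩
  let e := LinearEquiv.ofBijective (sylvLin G F) hbij
  refine ⟨⟨sylvCLM G F, LinearMap.toContinuousLinearMap (e.symm : _ →ₗ[ℝ] _), ?_, ?_⟩, rfl⟩
  · refine ContinuousLinearMap.ext fun X => ?_
    rw [ContinuousLinearMap.mul_apply, ContinuousLinearMap.one_apply]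
    exact e.apply_symm_apply X
  · refine ContinuousLinearMap.ext fun X => ?_
    rw [ContinuousLinearMap.mul_apply, ContinuousLinearMap.one_apply]
    exact e.symm_apply_apply X

lemma sylv_bound (S : Set (Matrix (Fin r) (Fin r) ℝ)) (hS : IsCompact S)
    (g : Matrix (Fin r) (Fin r) ℝ → Matrix (Fin a) (Fin a) ℝ)
    (f : Matrix (Fin r) (Fin r) ℝ → Matrix (Fin b) (Fin b) ℝ)
    (hg : Continuous g) (hf : Continuous f)
    (hgs : ∀ M ∈ S, IsStable (g M)) (hfs : ∀ M ∈ S, IsStable (f M)) :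
    ∃ K > (0:ℝ), ∀ M ∈ S, ∀ X R : Matrix (Fin a) (Fin b) ℝ,
      g M * X + X * f M + R = 0 → ‖X‖ ≤ K * ‖R‖ := by
  letI hNR : NormedRing (Matrix (Fin a) (Fin b) ℝ →L[ℝ] Matrix (Fin a) (Fin b) ℝ) :=
    ContinuousLinearMap.toNormedRing
  haveI : @SequentialSpace (Matrix (Fin a) (Fin b) ℝ) instTopologicalSpaceMatrix :=
    inferInstanceAs (SequentialSpace (Fin a → Fin b → ℝ))
  haveI : @CompleteSpace (Matrix (Fin a) (Fin b) ℝ →L[ℝ] Matrix (Fin a) (Fin b) ℝ)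
      hNR.toPseudoMetricSpace.toUniformSpace :=
    ContinuousLinearMap.instCompleteSpace
  set T : Matrix (Fin r) (Fin r) ℝ → _ := fun M => sylvCLM (g M) (f M) with hT
  have hTcont : Continuous T := continuous_sylvCLM.comp (hg.prodMk hf)
  have hcont : ContinuousOn (fun M => ‖Ring.inverse (T M)‖) S := by
    intro M hM
    apply ContinuousAt.continuousWithinAt
    have hu : IsUnit (T M) := sylvCLM_isUnit (hgs M hM) (hfs M hM)
    obtain ⟨u, hu⟩ := hu
    have h1 : ContinuousAt Ring.inverse (T M) := by
      rw [← hu]; exact NormedRing.inverse_continuousAt u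
    exact (continuous_norm.continuousAt).comp (h1.comp hTcont.continuousAt)
  obtain ⟨K₀, hK₀⟩ := hS.exists_bound_of_continuousOn hcont
  refine ⟨max K₀ 0 + 1, by positivity, ?_⟩
  intro M hM X R heq
  have hu : IsUnit (T M) := sylvCLM_isUnit (hgs M hM) (hfs M hM)
  have hTX : T M X = -R := by
    have : g M * X + X * f M = -R := by
      rw [eq_neg_iff_add_eq_zero]; exact heq
    simpa [hT, sylvCLM, sylvLin, LinearMap.toContinuousLinearMap] using this
  have hXeq : X = Ring.inverse (T M) (-R) := by
    rw [← hTX]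
    have h1 : Ring.inverse (T M) * T M = 1 := Ring.inverse_mul_cancel _ hu
    calc X = (Ring.inverse (T M) * T M) X := by rw [h1]; rfl
      _ = Ring.inverse (T M) (T M X) := rfl
  calc ‖X‖ = ‖Ring.inverse (T M) (-R)‖ := by rw [← hXeq]
    _ ≤ ‖Ring.inverse (T M)‖ * ‖-R‖ := ContinuousLinearMap.le_opNorm _ _
    _ ≤ (max K₀ 0 + 1) * ‖R‖ := by
        rw [norm_neg]
        apply mul_le_mul_of_nonneg_right _ (norm_nonneg R)
        have := hK₀ M hM
        have h2 : ‖Ring.inverse (T M)‖ ≤ K₀ := by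
          simpa [abs_of_nonneg (norm_nonneg _)] using this
        calc ‖Ring.inverse (T M)‖ ≤ K₀ := h2
          _ ≤ max K₀ 0 := le_max_left _ _
          _ ≤ max K₀ 0 + 1 := by linarith

end opbound

lemma continuous_transpose {u v : ℕ} :
    Continuous (fun M : Matrix (Fin u) (Fin v) ℝ => Mᵀ) := by
  have h : IsLinearMap ℝ (fun M : Matrix (Fin u) (Fin v) ℝ => Mᵀ) :=
    ⟨fun x y => Matrix.transpose_add x y, fun c x => Matrix.transpose_smul c x⟩
  exact (h.mk' _).continuous_of_finiteDimensional

set_option maxHeartbeats 2000000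

/-- Lipschitz continuity (with block Lipschitz constant
`(c₁ + c₂ ‖B_r‖_F ‖C_r‖_F) ‖B_r‖_F ‖C_r‖_F`) of the gradient `Q P + Yᵀ X`
with respect to `A_r` over a compact set `S` of stable matrices. -/
theorem gradA_lipschitz {n m p r : ℕ}
    (A : Matrix (Fin n) (Fin n) ℝ) (hA : IsStable A)
    (B : Matrix (Fin n) (Fin m) ℝ) (C : Matrix (Fin p) (Fin n) ℝ)
    (S : Set (Matrix (Fin r) (Fin r) ℝ)) (hSne : S.Nonempty)
    (hScpt : IsCompact S) (hSstable : ∀ M ∈ S, IsStable M) :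
    ∃ c₁ > (0 : ℝ), ∃ c₂ > (0 : ℝ),
      ∀ A₁ ∈ S, ∀ A₂ ∈ S,
      ∀ (B_r : Matrix (Fin r) (Fin m) ℝ) (C_r : Matrix (Fin p) (Fin r) ℝ)
        (X₁ X₂ Y₁ Y₂ : Matrix (Fin n) (Fin r) ℝ)
        (P₁ P₂ Q₁ Q₂ : Matrix (Fin r) (Fin r) ℝ),
        A * X₁ + X₁ * A₁ᵀ + B * B_rᵀ = 0 →
        Aᵀ * Y₁ + Y₁ * A₁ - Cᵀ * C_r = 0 →
        A₁ * P₁ + P₁ * A₁ᵀ + B_r * B_rᵀ = 0 →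
        A₁ᵀ * Q₁ + Q₁ * A₁ + C_rᵀ * C_r = 0 →
        A * X₂ + X₂ * A₂ᵀ + B * B_rᵀ = 0 →
        Aᵀ * Y₂ + Y₂ * A₂ - Cᵀ * C_r = 0 →
        A₂ * P₂ + P₂ * A₂ᵀ + B_r * B_rᵀ = 0 →
        A₂ᵀ * Q₂ + Q₂ * A₂ + C_rᵀ * C_r = 0 →
        frobNorm ((Q₁ * P₁ + Y₁ᵀ * X₁) - (Q₂ * P₂ + Y₂ᵀ * X₂)) ≤
          (c₁ + c₂ * frobNorm B_r * frobNorm C_r) *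
            frobNorm B_r * frobNorm C_r * frobNorm (A₁ - A₂) := by
  obtain ⟨KX, hKX0, hKX⟩ := sylv_bound S hScpt (fun _ => A) (fun M => Mᵀ)
    continuous_const continuous_transpose (fun M _ => hA)
    (fun M hM => (hSstable M hM).transpose)
  obtain ⟨KY, hKY0, hKY⟩ := sylv_bound S hScpt (fun _ => Aᵀ) (fun M => M)
    continuous_const continuous_id (fun M _ => hA.transpose) (fun M hM => hSstable M hM)
  obtain ⟨KP, hKP0, hKP⟩ := sylv_bound S hScpt (fun M => M) (fun M => Mᵀ)
    continuous_id continuous_transpose (fun M hM => hSstable M hM)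
    (fun M hM => (hSstable M hM).transpose)
  obtain ⟨KQ, hKQ0, hKQ⟩ := sylv_bound S hScpt (fun M => Mᵀ) (fun M => M)
    continuous_transpose continuous_id (fun M hM => (hSstable M hM).transpose)
    (fun M hM => hSstable M hM)
  set bB := ‖B‖ with hbB
  set bC := ‖C‖ with hbC
  refine ⟨KY*KX*KX*(bB*bC) + KY*KY*KX*(bB*bC) + 1, by positivity,
    2*KQ*KP*KP + 2*KQ*KQ*KP + 1, by positivity, ?_⟩
  intro A₁ hA₁ A₂ hA₂ B_r C_r X₁ X₂ Y₁ Y₂ P₁ P₂ Q₁ Q₂ hX1 hY1 hP1 hQ1 hX2 hY2 hP2 hQ2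
  simp only [frobNorm_eq_norm]
  set β := ‖B_r‖ with hβ
  set γ := ‖C_r‖ with hγ
  set δ := ‖A₁ - A₂‖ with hδ
  have hβ0 : 0 ≤ β := norm_nonneg _
  have hγ0 : 0 ≤ γ := norm_nonneg _
  have hδ0 : 0 ≤ δ := norm_nonneg _
  have hbB0 : 0 ≤ bB := norm_nonneg _
  have hbC0 : 0 ≤ bC := norm_nonneg _
  -- basic bounds
  have nX2 : ‖X₂‖ ≤ KX*(bB*β) := by
    refine (hKX A₂ hA₂ X₂ (B*B_rᵀ) hX2).trans
      (mul_le_mul_of_nonneg_left ?_ hKX0.le)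
    calc ‖B*B_rᵀ‖ ≤ ‖B‖*‖B_rᵀ‖ := Matrix.frobenius_norm_mul _ _
      _ = bB*β := by rw [Matrix.frobenius_norm_transpose]
  have hY1' : Aᵀ*Y₁ + Y₁*A₁ + (-(Cᵀ*C_r)) = 0 := by rw [← sub_eq_add_neg]; exact hY1
  have hY2' : Aᵀ*Y₂ + Y₂*A₂ + (-(Cᵀ*C_r)) = 0 := by rw [← sub_eq_add_neg]; exact hY2
  have nCC : ‖-(Cᵀ*C_r)‖ ≤ bC*γ := by
    rw [norm_neg]
    calc ‖Cᵀ*C_r‖ ≤ ‖Cᵀ‖*‖C_r‖ := Matrix.frobenius_norm_mul _ _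
      _ = bC*γ := by rw [Matrix.frobenius_norm_transpose]
  have nY1 : ‖Y₁‖ ≤ KY*(bC*γ) :=
    (hKY A₁ hA₁ Y₁ (-(Cᵀ*C_r)) hY1').trans (mul_le_mul_of_nonneg_left nCC hKY0.le)
  have nP2 : ‖P₂‖ ≤ KP*(β*β) := by
    refine (hKP A₂ hA₂ P₂ (B_r*B_rᵀ) hP2).trans
      (mul_le_mul_of_nonneg_left ?_ hKP0.le)
    calc ‖B_r*B_rᵀ‖ ≤ ‖B_r‖*‖B_rᵀ‖ := Matrix.frobenius_norm_mul _ _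
      _ = β*β := by rw [Matrix.frobenius_norm_transpose]
  have nQ1 : ‖Q₁‖ ≤ KQ*(γ*γ) := by
    refine (hKQ A₁ hA₁ Q₁ (C_rᵀ*C_r) hQ1).trans
      (mul_le_mul_of_nonneg_left ?_ hKQ0.le)
    calc ‖C_rᵀ*C_r‖ ≤ ‖C_rᵀ‖*‖C_r‖ := Matrix.frobenius_norm_mul _ _
      _ = γ*γ := by rw [Matrix.frobenius_norm_transpose]
  -- difference equations
  have hDX : A * (X₁ - X₂) + (X₁ - X₂) * A₁ᵀ + X₂ * (A₁ - A₂)ᵀ = 0 := by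
    have hid : A * (X₁ - X₂) + (X₁ - X₂) * A₁ᵀ + X₂ * (A₁ - A₂)ᵀ
        = (A * X₁ + X₁ * A₁ᵀ + B * B_rᵀ) - (A * X₂ + X₂ * A₂ᵀ + B * B_rᵀ) := by
      rw [Matrix.transpose_sub, Matrix.mul_sub, Matrix.sub_mul, Matrix.mul_sub]
      abel
    rw [hid, hX1, hX2, sub_zero]
  have hDY : Aᵀ * (Y₁ - Y₂) + (Y₁ - Y₂) * A₁ + Y₂ * (A₁ - A₂) = 0 := by
    have hid : Aᵀ * (Y₁ - Y₂) + (Y₁ - Y₂) * A₁ + Y₂ * (A₁ - A₂)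
        = (Aᵀ * Y₁ + Y₁ * A₁ - Cᵀ * C_r) - (Aᵀ * Y₂ + Y₂ * A₂ - Cᵀ * C_r) := by
      rw [Matrix.mul_sub, Matrix.sub_mul, Matrix.mul_sub]
      abel
    rw [hid, hY1, hY2, sub_zero]
  have hDP : A₁ * (P₁ - P₂) + (P₁ - P₂) * A₁ᵀ + ((A₁ - A₂) * P₂ + P₂ * (A₁ - A₂)ᵀ) = 0 := by
    have hid : A₁ * (P₁ - P₂) + (P₁ - P₂) * A₁ᵀ + ((A₁ - A₂) * P₂ + P₂ * (A₁ - A₂)ᵀ)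
        = (A₁ * P₁ + P₁ * A₁ᵀ + B_r * B_rᵀ) - (A₂ * P₂ + P₂ * A₂ᵀ + B_r * B_rᵀ) := by
      rw [Matrix.transpose_sub, Matrix.mul_sub, Matrix.sub_mul, Matrix.sub_mul, Matrix.mul_sub]
      abel
    rw [hid, hP1, hP2, sub_zero]
  have hDQ : A₁ᵀ * (Q₁ - Q₂) + (Q₁ - Q₂) * A₁ + ((A₁ - A₂)ᵀ * Q₂ + Q₂ * (A₁ - A₂)) = 0 := by
    have hid : A₁ᵀ * (Q₁ - Q₂) + (Q₁ - Q₂) * A₁ + ((A₁ - A₂)ᵀ * Q₂ + Q₂ * (A₁ - A₂))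
        = (A₁ᵀ * Q₁ + Q₁ * A₁ + C_rᵀ * C_r) - (A₂ᵀ * Q₂ + Q₂ * A₂ + C_rᵀ * C_r) := by
      rw [Matrix.transpose_sub, Matrix.mul_sub, Matrix.sub_mul, Matrix.sub_mul, Matrix.mul_sub]
      abel
    rw [hid, hQ1, hQ2, sub_zero]
  -- difference bounds
  have nDX : ‖X₁ - X₂‖ ≤ KX*((KX*(bB*β))*δ) := by
    refine (hKX A₁ hA₁ (X₁ - X₂) (X₂ * (A₁ - A₂)ᵀ) hDX).trans
      (mul_le_mul_of_nonneg_left ?_ hKX0.le)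
    calc ‖X₂ * (A₁ - A₂)ᵀ‖ ≤ ‖X₂‖*‖(A₁ - A₂)ᵀ‖ := Matrix.frobenius_norm_mul _ _
      _ = ‖X₂‖*δ := by rw [Matrix.frobenius_norm_transpose]
      _ ≤ (KX*(bB*β))*δ := mul_le_mul_of_nonneg_right nX2 hδ0
  have nDY : ‖Y₁ - Y₂‖ ≤ KY*((KY*(bC*γ))*δ) := by
    have nY2 : ‖Y₂‖ ≤ KY*(bC*γ) :=
      (hKY A₂ hA₂ Y₂ (-(Cᵀ*C_r)) hY2').trans (mul_le_mul_of_nonneg_left nCC hKY0.le)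
    refine (hKY A₁ hA₁ (Y₁ - Y₂) (Y₂ * (A₁ - A₂)) hDY).trans
      (mul_le_mul_of_nonneg_left ?_ hKY0.le)
    calc ‖Y₂ * (A₁ - A₂)‖ ≤ ‖Y₂‖*δ := Matrix.frobenius_norm_mul _ _
      _ ≤ (KY*(bC*γ))*δ := mul_le_mul_of_nonneg_right nY2 hδ0
  have nDP : ‖P₁ - P₂‖ ≤ KP*(2*(KP*(β*β))*δ) := by
    refine (hKP A₁ hA₁ (P₁ - P₂) ((A₁ - A₂) * P₂ + P₂ * (A₁ - A₂)ᵀ) hDP).trans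
      (mul_le_mul_of_nonneg_left ?_ hKP0.le)
    have h1 : ‖(A₁ - A₂) * P₂‖ ≤ δ*‖P₂‖ := Matrix.frobenius_norm_mul _ _
    have h2 : ‖P₂ * (A₁ - A₂)ᵀ‖ ≤ ‖P₂‖*δ := by
      calc ‖P₂ * (A₁ - A₂)ᵀ‖ ≤ ‖P₂‖*‖(A₁ - A₂)ᵀ‖ := Matrix.frobenius_norm_mul _ _
        _ = ‖P₂‖*δ := by rw [Matrix.frobenius_norm_transpose]
    calc ‖(A₁ - A₂) * P₂ + P₂ * (A₁ - A₂)ᵀ‖ ≤ ‖(A₁ - A₂) * P₂‖ + ‖P₂ * (A₁ - A₂)ᵀ‖ :=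
          norm_add_le _ _
      _ ≤ δ*‖P₂‖ + ‖P₂‖*δ := add_le_add h1 h2
      _ = 2*‖P₂‖*δ := by ring
      _ ≤ 2*(KP*(β*β))*δ :=
          mul_le_mul_of_nonneg_right (by linarith [nP2]) hδ0
  have nDQ : ‖Q₁ - Q₂‖ ≤ KQ*(2*(KQ*(γ*γ))*δ) := by
    have nQ2 : ‖Q₂‖ ≤ KQ*(γ*γ) := by
      refine (hKQ A₂ hA₂ Q₂ (C_rᵀ*C_r) hQ2).trans
        (mul_le_mul_of_nonneg_left ?_ hKQ0.le)
      calc ‖C_rᵀ*C_r‖ ≤ ‖C_rᵀ‖*‖C_r‖ := Matrix.frobenius_norm_mul _ _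
        _ = γ*γ := by rw [Matrix.frobenius_norm_transpose]
    refine (hKQ A₁ hA₁ (Q₁ - Q₂) ((A₁ - A₂)ᵀ * Q₂ + Q₂ * (A₁ - A₂)) hDQ).trans
      (mul_le_mul_of_nonneg_left ?_ hKQ0.le)
    have h1 : ‖(A₁ - A₂)ᵀ * Q₂‖ ≤ δ*‖Q₂‖ := by
      calc ‖(A₁ - A₂)ᵀ * Q₂‖ ≤ ‖(A₁ - A₂)ᵀ‖*‖Q₂‖ := Matrix.frobenius_norm_mul _ _
        _ = δ*‖Q₂‖ := by rw [Matrix.frobenius_norm_transpose]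
    have h2 : ‖Q₂ * (A₁ - A₂)‖ ≤ ‖Q₂‖*δ := Matrix.frobenius_norm_mul _ _
    calc ‖(A₁ - A₂)ᵀ * Q₂ + Q₂ * (A₁ - A₂)‖ ≤ ‖(A₁ - A₂)ᵀ * Q₂‖ + ‖Q₂ * (A₁ - A₂)‖ :=
          norm_add_le _ _
      _ ≤ δ*‖Q₂‖ + ‖Q₂‖*δ := add_le_add h1 h2
      _ = 2*‖Q₂‖*δ := by ring
      _ ≤ 2*(KQ*(γ*γ))*δ :=
          mul_le_mul_of_nonneg_right (by linarith [nQ2]) hδ0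
  -- decomposition of the gradient difference
  have hGid : (Q₁ * P₁ + Y₁ᵀ * X₁) - (Q₂ * P₂ + Y₂ᵀ * X₂)
      = Q₁*(P₁ - P₂) + (Q₁ - Q₂)*P₂ + Y₁ᵀ*(X₁ - X₂) + (Y₁ - Y₂)ᵀ*X₂ := by
    rw [Matrix.transpose_sub, Matrix.mul_sub, Matrix.sub_mul, Matrix.mul_sub, Matrix.sub_mul]
    abel
  have T1 : ‖Q₁*(P₁ - P₂)‖ ≤ (KQ*(γ*γ))*(KP*(2*(KP*(β*β))*δ)) :=
    (Matrix.frobenius_norm_mul _ _).trans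
      (mul_le_mul nQ1 nDP (norm_nonneg _) (by positivity))
  have T2 : ‖(Q₁ - Q₂)*P₂‖ ≤ (KQ*(2*(KQ*(γ*γ))*δ))*(KP*(β*β)) :=
    (Matrix.frobenius_norm_mul _ _).trans
      (mul_le_mul nDQ nP2 (norm_nonneg _) (by positivity))
  have T3 : ‖Y₁ᵀ*(X₁ - X₂)‖ ≤ (KY*(bC*γ))*(KX*((KX*(bB*β))*δ)) := by
    refine (Matrix.frobenius_norm_mul _ _).trans ?_
    rw [Matrix.frobenius_norm_transpose]
    exact mul_le_mul nY1 nDX (norm_nonneg _) (by positivity)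
  have T4 : ‖(Y₁ - Y₂)ᵀ*X₂‖ ≤ (KY*((KY*(bC*γ))*δ))*(KX*(bB*β)) := by
    refine (Matrix.frobenius_norm_mul _ _).trans ?_
    rw [Matrix.frobenius_norm_transpose]
    exact mul_le_mul nDY nX2 (norm_nonneg _) (by positivity)
  have hsum : ‖(Q₁ * P₁ + Y₁ᵀ * X₁) - (Q₂ * P₂ + Y₂ᵀ * X₂)‖ ≤
      (KQ*(γ*γ))*(KP*(2*(KP*(β*β))*δ)) + (KQ*(2*(KQ*(γ*γ))*δ))*(KP*(β*β))
      + (KY*(bC*γ))*(KX*((KX*(bB*β))*δ)) + (KY*((KY*(bC*γ))*δ))*(KX*(bB*β)) := by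
    rw [hGid]
    calc ‖Q₁*(P₁ - P₂) + (Q₁ - Q₂)*P₂ + Y₁ᵀ*(X₁ - X₂) + (Y₁ - Y₂)ᵀ*X₂‖
        ≤ ‖Q₁*(P₁ - P₂) + (Q₁ - Q₂)*P₂ + Y₁ᵀ*(X₁ - X₂)‖ + ‖(Y₁ - Y₂)ᵀ*X₂‖ := norm_add_le _ _
      _ ≤ ‖Q₁*(P₁ - P₂) + (Q₁ - Q₂)*P₂‖ + ‖Y₁ᵀ*(X₁ - X₂)‖ + ‖(Y₁ - Y₂)ᵀ*X₂‖ := by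
          have := norm_add_le (Q₁*(P₁ - P₂) + (Q₁ - Q₂)*P₂) (Y₁ᵀ*(X₁ - X₂))
          linarith
      _ ≤ ‖Q₁*(P₁ - P₂)‖ + ‖(Q₁ - Q₂)*P₂‖ + ‖Y₁ᵀ*(X₁ - X₂)‖ + ‖(Y₁ - Y₂)ᵀ*X₂‖ := by
          have := norm_add_le (Q₁*(P₁ - P₂)) ((Q₁ - Q₂)*P₂)
          linarith
      _ ≤ _ := by linarith [T1, T2, T3, T4]
  refine hsum.trans ?_
  have hkey : (KY*KX*KX*(bB*bC) + KY*KY*KX*(bB*bC) + 1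
        + (2*KQ*KP*KP + 2*KQ*KQ*KP + 1) * β * γ) * β * γ * δ
      = (KQ*(γ*γ))*(KP*(2*(KP*(β*β))*δ)) + (KQ*(2*(KQ*(γ*γ))*δ))*(KP*(β*β))
        + (KY*(bC*γ))*(KX*((KX*(bB*β))*δ)) + (KY*((KY*(bC*γ))*δ))*(KX*(bB*β))
        + (β*γ*δ + β*β*γ*γ*δ) := by ring
  have h1 : 0 ≤ β*γ*δ := by positivity
  have h2 : 0 ≤ β*β*γ*γ*δ := by positivity
  linarith [hkey, h1, h2]
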